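/- arXiv:1909.09643 — 2 statements merged into one kernel-verified Lean document; each statement's English description precedes it below -/
import Mathlib

section
/- Let 𝒜 be a laminar family of subsets of a finite set S, and let m be a positive integer. Then there exists a subset A ⊆ S such that for every P ∈ 𝒜, ⌊|P|/m⌋ ≤ |A ∩ P| ≤ ⌈|P|/m⌉. -/
/-- A family of finite sets is laminar if any two members are nested or disjoint. -/
def Laminar {S : Type*} [DecidableEq S] (𝒜 : Set (Finset S)) : Prop :=
  ∀ A ∈ 𝒜, ∀ B ∈ 𝒜, A ⊆ B ∨ B ⊆ A ∨ A ∩ B = ∅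

/-- Any finite set can be mapped bijectively onto an interval of naturals. -/
lemma exists_map_to_Ico {S : Type*} [DecidableEq S] (T : Finset S) (a : ℕ) :
    ∃ f : S → ℕ, Finset.image f T = Finset.Ico a (a + T.card) := by
  have hcard : T.card = (Finset.Ico a (a + T.card)).card := by
    rw [Nat.card_Ico]; omega
  let e := Finset.equivOfCardEq hcard
  refine ⟨fun x => if h : x ∈ T then (e ⟨x, h⟩ : ℕ) else 0, ?_⟩
  apply Finset.eq_of_subset_of_card_le
  · intro y hy
    simp only [Finset.mem_image] at hy
    obtain ⟨x, hx, rfl⟩ := hy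
    simpa [hx] using (e ⟨x, hx⟩).2
  · rw [← hcard]
    apply Finset.card_le_card_of_injOn (fun x => if h : x ∈ T then ((e ⟨x, h⟩ : ℕ)) else 0)
    · intro x hx
      simp only [Finset.mem_coe] at hx
      exact Finset.mem_image_of_mem _ hx
    · intro x hx y hy hxy
      simp only [Finset.mem_coe] at hx hy
      simp only [hx, hy, dif_pos] at hxy
      have := e.injective (Subtype.ext hxy)
      exact Subtype.ext_iff.mp this

/-- Key lemma: a laminar family inside `T` can be laid out so that every member
is an interval. -/
lemma laminar_interval {S : Type*} [DecidableEq S] (𝒜 : Set (Finset S))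
    (h𝒜 : Laminar 𝒜) :
    ∀ n (T : Finset S), T.card ≤ n → ∀ a : ℕ, ∃ f : S → ℕ,
      Finset.image f T = Finset.Ico a (a + T.card) ∧
      ∀ P ∈ 𝒜, P ⊆ T → ∃ b, Finset.image f P = Finset.Ico b (b + P.card) := by
  intro n
  induction n with
  | zero =>
    intro T hT a
    have : T = ∅ := Finset.card_eq_zero.mp (Nat.le_zero.mp hT)
    subst this
    obtain ⟨f, hf⟩ := exists_map_to_Ico (∅ : Finset S) a
    refine ⟨f, hf, ?_⟩
    intro P hP hPT
    have : P = ∅ := Finset.subset_empty.mp hPT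
    subst this
    exact ⟨0, by simp⟩
  | succ n ih =>
    intro T hT a
    classical
    set C : Finset (Finset S) :=
      T.powerset.filter (fun P => P ∈ 𝒜 ∧ P ≠ ∅ ∧ P ≠ T) with hC
    by_cases hCne : C.Nonempty
    · obtain ⟨P, hPC, hPmax⟩ := C.exists_max_image Finset.card hCne
      simp only [hC, Finset.mem_filter, Finset.mem_powerset] at hPC
      obtain ⟨hPT, hPA, hPne, hPneT⟩ := hPC
      have hPsub : P ⊂ T := hPT.ssubset_of_ne hPneT
      have hPcard : P.card < T.card := Finset.card_lt_card hPsub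
      have hTPcard : (T \ P).card = T.card - P.card := Finset.card_sdiff_of_subset hPT
      have hPposcard : 0 < P.card := Finset.card_pos.mpr (Finset.nonempty_iff_ne_empty.mpr hPne)
      obtain ⟨f₁, hf₁, hf₁P⟩ := ih P (by omega) a
      obtain ⟨f₂, hf₂, hf₂P⟩ := ih (T \ P) (by omega) (a + P.card)
      set f : S → ℕ := fun x => if x ∈ P then f₁ x else f₂ x with hfdef
      have himgP : ∀ Q : Finset S, Q ⊆ P → Finset.image f Q = Finset.image f₁ Q := by
        intro Q hQ
        apply Finset.image_congr
        intro x hx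
        simp only [Finset.mem_coe] at hx
        simp [hfdef, hQ hx]
      have himgTP : ∀ Q : Finset S, Q ⊆ T \ P → Finset.image f Q = Finset.image f₂ Q := by
        intro Q hQ
        apply Finset.image_congr
        intro x hx
        simp only [Finset.mem_coe] at hx
        have := hQ hx
        simp only [Finset.mem_sdiff] at this
        simp [hfdef, this.2]
      have hTsplit : P ∪ (T \ P) = T := Finset.union_sdiff_of_subset hPT
      have himgT : Finset.image f T = Finset.Ico a (a + T.card) := by
        have h0 : Finset.image f T = Finset.image f P ∪ Finset.image f (T \ P) := by
          rw [← Finset.image_union, hTsplit]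
        rw [h0, himgP P (Finset.Subset.refl P), himgTP (T \ P) (Finset.Subset.refl _),
          hf₁, hf₂, Finset.Ico_union_Ico_eq_Ico (by omega) (by omega)]
        congr 1
        omega
      refine ⟨f, himgT, ?_⟩
      intro Q hQA hQT
      rcases h𝒜 Q hQA P hPA with hQP | hPQ | hdisj
      · obtain ⟨b, hb⟩ := hf₁P Q hQA hQP
        exact ⟨b, by rw [himgP Q hQP, hb]⟩
      · by_cases hQeqP : Q = P
        · subst hQeqP
          obtain ⟨b, hb⟩ := hf₁P Q hQA le_rfl
          exact ⟨b, by rw [himgP Q le_rfl, hb]⟩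
        · -- P ⊊ Q, so Q = T (else Q ∈ C with bigger card)
          have hQeqT : Q = T := by
            by_contra hne
            have hQne : Q ≠ ∅ := by
              intro h; subst h
              exact hPne (Finset.subset_empty.mp hPQ)
            have hQC : Q ∈ C := by
              simp only [hC, Finset.mem_filter, Finset.mem_powerset]
              exact ⟨hQT, hQA, hQne, hne⟩
            have := hPmax Q hQC
            have : P.card < Q.card := Finset.card_lt_card (hPQ.ssubset_of_ne (Ne.symm hQeqP))
            omega
          subst hQeqT
          exact ⟨a, himgT⟩
      · -- Q disjoint from P, so Q ⊆ T \ P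
        have hQTP : Q ⊆ T \ P := by
          intro x hx
          simp only [Finset.mem_sdiff]
          refine ⟨hQT hx, fun hxP => ?_⟩
          have : x ∈ Q ∩ P := Finset.mem_inter.mpr ⟨hx, hxP⟩
          rw [hdisj] at this
          exact absurd this (Finset.notMem_empty x)
        obtain ⟨b, hb⟩ := hf₂P Q hQA hQTP
        exact ⟨b, by rw [himgTP Q hQTP, hb]⟩
    · -- no nontrivial members: any bijection works
      obtain ⟨f, hf⟩ := exists_map_to_Ico T a
      refine ⟨f, hf, ?_⟩
      intro P hP hPT
      have : P = ∅ ∨ P = T := by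
        by_contra h
        push_neg at h
        apply hCne
        refine ⟨P, ?_⟩
        simp only [hC, Finset.mem_filter, Finset.mem_powerset]
        exact ⟨hPT, hP, h.1.ne_empty, h.2⟩
      rcases this with rfl | rfl
      · exact ⟨0, by simp⟩
      · exact ⟨a, hf⟩

lemma count_dvd_Ico (m b k : ℕ) :
    ((Finset.Ico b (b + k)).filter (fun y => m ∣ y + 1)).card = (b + k) / m - b / m := by
  have hsplit : Finset.range (b + k) = Finset.range b ∪ Finset.Ico b (b + k) := by
    simp only [Finset.range_eq_Ico]
    exact (Finset.Ico_union_Ico_eq_Ico (Nat.zero_le b) (Nat.le_add_right b k)).symm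
  have hdisj : Disjoint (Finset.range b) (Finset.Ico b (b + k)) := by
    rw [Finset.range_eq_Ico]
    exact Finset.Ico_disjoint_Ico_consecutive 0 b (b + k)
  have h1 := Nat.card_multiples (b + k) m
  have h2 := Nat.card_multiples b m
  rw [hsplit, Finset.filter_union, Finset.card_union_of_disjoint
    (hdisj.mono (Finset.filter_subset _ _) (Finset.filter_subset _ _))] at h1
  omega

/-- Single-family version of Nash-Williams' lemma. -/
theorem stmt7 {S : Type*} [Fintype S] [DecidableEq S]
    (𝒜 : Set (Finset S)) (h𝒜 : Laminar 𝒜) (m : ℕ) (hm : 0 < m) :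
    ∃ A : Finset S, ∀ P ∈ 𝒜,
      P.card / m ≤ (A ∩ P).card ∧ (A ∩ P).card ≤ (P.card + m - 1) / m := by
  classical
  obtain ⟨f, hfT, hfP⟩ := laminar_interval 𝒜 h𝒜 (Finset.univ : Finset S).card
    Finset.univ le_rfl 0
  have hinj : Set.InjOn f (Finset.univ : Finset S) := by
    rw [← Finset.card_image_iff, hfT, Nat.card_Ico]
    omega
  refine ⟨Finset.univ.filter (fun x => m ∣ f x + 1), ?_⟩
  intro P hP
  obtain ⟨b, hb⟩ := hfP P hP (Finset.subset_univ P)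
  set k := P.card with hk
  clear_value k
  have hAP : Finset.univ.filter (fun x => m ∣ f x + 1) ∩ P
      = P.filter (fun x => m ∣ f x + 1) := by
    ext x; simp [Finset.mem_filter, Finset.mem_inter, and_comm]
  have hcard : (P.filter (fun x => m ∣ f x + 1)).card = (b + k) / m - b / m := by
    have hinj' : Set.InjOn f (P.filter (fun x => m ∣ f x + 1) : Finset S) := by
      apply hinj.mono
      intro x hx
      simp
    have hfi := Finset.filter_image (s := P) (f := f) (p := fun y => m ∣ y + 1)
    rw [← Finset.card_image_of_injOn hinj', ← hfi, hb, count_dvd_Ico]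
  rw [hAP, hcard]
  constructor
  · -- lower bound: k/m ≤ (b+k)/m - b/m
    have h1 : b / m + k / m ≤ (b + k) / m := by
      rw [Nat.le_div_iff_mul_le hm, Nat.add_mul]
      have := Nat.div_mul_le_self b m
      have := Nat.div_mul_le_self k m
      omega
    have h2 : b / m ≤ (b + k) / m := Nat.div_le_div_right (by omega)
    omega
  · -- upper bound: (b+k)/m - b/m ≤ (k+m-1)/m
    have hbm := Nat.div_add_mod b m
    have hmod : b % m < m := Nat.mod_lt b hm
    have h3 : b + k ≤ (k + m - 1) + m * (b / m) := by omega
    have h4 : (b + k) / m ≤ ((k + m - 1) + m * (b / m)) / m := Nat.div_le_div_right h3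
    rw [Nat.add_mul_div_left _ _ hm] at h4
    exact Nat.sub_le_iff_le_add.mpr h4
end

section
/- Let G be a k-edge-colored hypergraph with a distinguished vertex α. For each color i, let H_i be the set of hinges at α incident with edges of color i; for each edge e, let H_e be the set of hinges at α incident with e; for each α-wing W of a color class, let H_W be its hinge set at α; and let H^i be the union of H_W over α-wings W of color class i with degree at α at least 2. Then the family 𝒜 consisting of all H_i, all H^i, all H_W, and all H_e is a laminar family of subsets of the hinge set H(α). -/
variable {V E : Type*}

/-- Vertex set of the sub-hypergraph given by a set W of edge instances. -/
def vertsIdx (edge : E → Multiset V) (W : Finset E) : Set V :=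
  {v | ∃ e ∈ W, v ∈ edge e}

/-- Adjacency within the sub-hypergraph W. -/
def stepIdx (edge : E → Multiset V) (W : Finset E) (u v : V) : Prop :=
  ∃ e ∈ W, u ∈ edge e ∧ v ∈ edge e

/-- Connectivity of the sub-hypergraph W. -/
def connIdx (edge : E → Multiset V) (W : Finset E) : Prop :=
  ∀ u ∈ vertsIdx edge W, ∀ v ∈ vertsIdx edge W,
    Relation.ReflTransGen (stepIdx edge W) u v

/-- α is a cut vertex of the sub-hypergraph W. -/
def cutIdx [DecidableEq E] (edge : E → Multiset V) (W : Finset E) (α : V) : Prop :=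
  ∃ I J : Finset E, I ∪ J = W ∧ Disjoint I J ∧ I.Nonempty ∧ J.Nonempty ∧
    vertsIdx edge I ∩ vertsIdx edge J = {α}

/-- W is an α-wing of the sub-hypergraph G: non-trivial, connected, α is not a
cut vertex of W, and no edge of G outside W meets V(W) ∖ {α}. -/
def wingIdx [DecidableEq E] (edge : E → Multiset V) (G W : Finset E) (α : V) : Prop :=
  W ⊆ G ∧ W.Nonempty ∧ connIdx edge W ∧ ¬ cutIdx edge W α ∧
    ∀ e ∈ G \ W, ∀ v ∈ edge e, v ∈ vertsIdx edge W → v = α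

/-- Degree of α in the sub-hypergraph W (number of hinges of W at α). -/
def degIdx [DecidableEq V] (edge : E → Multiset V) (W : Finset E) (α : V) : ℕ :=
  ∑ e ∈ W, (edge e).count α

section MyAux

variable [DecidableEq V] [DecidableEq E] {edge : E → Multiset V} {α : V}

lemma my_hinge_mem (x : Σ e : E, Fin ((edge e).count α)) : α ∈ edge x.1 :=
  Multiset.count_pos.mp x.2.pos

lemma my_hinge_subsingleton [DecidableEq V] {W : Finset E}
    (h : degIdx edge W α ≤ 1) :
    Set.Subsingleton {x : Σ e : E, Fin ((edge e).count α) | x.1 ∈ W} := by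
  rintro ⟨e, i⟩ hx ⟨f, j⟩ hy
  simp only [Set.mem_setOf_eq] at hx hy
  have hef : e = f := by
    by_contra hef
    have hsub : ({e, f} : Finset E) ⊆ W := by
      intro g hg
      rcases Finset.mem_insert.mp hg with rfl | hg
      · exact hx
      · rcases Finset.mem_singleton.mp hg with rfl; exact hy
    have h2 : 2 ≤ degIdx edge W α := by
      calc 2 ≤ (edge e).count α + (edge f).count α := by have := i.pos; have := j.pos; omega
        _ = ∑ g ∈ ({e, f} : Finset E), (edge g).count α :=
            (Finset.sum_pair (f := fun g => (edge g).count α) hef).symm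
        _ ≤ ∑ g ∈ W, (edge g).count α := Finset.sum_le_sum_of_subset hsub
    omega
  subst hef
  have h' : ∑ g ∈ W, (edge g).count α ≤ 1 := h
  have hc : (edge e).count α ≤ 1 :=
    le_trans (Finset.single_le_sum (f := fun g => (edge g).count α)
      (fun _ _ => Nat.zero_le _) hx) h'
  have hi := i.isLt
  have hj := j.isLt
  have : i = j := Fin.ext (by omega)
  rw [this]

lemma my_wing_hinge_mem {G W W' : Finset E} (hW : wingIdx edge G W α)
    (hW' : wingIdx edge G W' α) {e f : E} (heW : e ∈ W) (heW' : e ∈ W')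
    (hαe : α ∈ edge e) (hfW : f ∈ W) (hαf : α ∈ edge f) : f ∈ W' := by
  by_contra hfW'
  apply hW.2.2.2.1
  refine ⟨W ∩ W', W \ W', ?_, ?_, ⟨e, Finset.mem_inter.mpr ⟨heW, heW'⟩⟩,
    ⟨f, Finset.mem_sdiff.mpr ⟨hfW, hfW'⟩⟩, ?_⟩
  · ext g; simp only [Finset.mem_union, Finset.mem_inter, Finset.mem_sdiff]; tauto
  · rw [Finset.disjoint_left]
    intro g hg hg'
    exact (Finset.mem_sdiff.mp hg').2 (Finset.mem_inter.mp hg).2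
  · apply Set.eq_singleton_iff_unique_mem.mpr
    constructor
    · exact ⟨⟨e, Finset.mem_inter.mpr ⟨heW, heW'⟩, hαe⟩,
        ⟨f, Finset.mem_sdiff.mpr ⟨hfW, hfW'⟩, hαf⟩⟩
    · rintro v ⟨⟨g, hg, hvg⟩, ⟨h, hh, hvh⟩⟩
      have hhG : h ∈ G \ W' := by
        rw [Finset.mem_sdiff] at hh ⊢
        exact ⟨hW.1 hh.1, hh.2⟩
      exact hW'.2.2.2.2 h hhG v hvh ⟨g, (Finset.mem_inter.mp hg).2, hvg⟩

lemma my_wing_laminar {G W W' : Finset E} (hW : wingIdx edge G W α)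
    (hW' : wingIdx edge G W' α) :
    {x : Σ e : E, Fin ((edge e).count α) | x.1 ∈ W} ⊆ {x | x.1 ∈ W'} ∨
    {x : Σ e : E, Fin ((edge e).count α) | x.1 ∈ W} ∩ {x | x.1 ∈ W'} = ∅ := by
  by_cases h : ∃ x : Σ e : E, Fin ((edge e).count α), x.1 ∈ W ∧ x.1 ∈ W'
  · obtain ⟨x, hx, hx'⟩ := h
    left
    intro y hy
    exact my_wing_hinge_mem hW hW' hx hx' (my_hinge_mem x) hy (my_hinge_mem y)
  · right
    ext x
    simp only [Set.mem_inter_iff, Set.mem_setOf_eq, Set.mem_empty_iff_false, iff_false]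
    exact fun hx => h ⟨x, hx⟩

lemma my_wing_color [Fintype E] {k : ℕ} {color : E → Fin k} {i : Fin k} {W : Finset E}
    (h : wingIdx edge (Finset.univ.filter (fun e => color e = i)) W α) :
    ∀ e ∈ W, color e = i := by
  intro e he
  have := h.1 he
  simpa using this

lemma my_disj_colors {k : ℕ} {color : E → Fin k} {i j : Fin k}
    {A B : Set (Σ e : E, Fin ((edge e).count α))} (hij : i ≠ j)
    (hA : ∀ x ∈ A, color x.1 = i) (hB : ∀ x ∈ B, color x.1 = j) : A ∩ B = ∅ := by
  ext x
  simp only [Set.mem_inter_iff, Set.mem_empty_iff_false, iff_false]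
  rintro ⟨ha, hb⟩
  exact hij ((hA x ha).symm.trans (hB x hb))

lemma my_subsingleton_laminar {T : Type*} {A B : Set T} (h : B.Subsingleton) :
    A ⊆ B ∨ B ⊆ A ∨ A ∩ B = ∅ := by
  by_cases hne : (A ∩ B).Nonempty
  · obtain ⟨x, hxA, hxB⟩ := hne
    right; left
    intro y hy
    rwa [h hy hxB]
  · right; right
    exact Set.not_nonempty_iff_eq_empty.mp hne

lemma my_subsingleton_laminar' {T : Type*} {A B : Set T} (h : A.Subsingleton) :
    A ⊆ B ∨ B ⊆ A ∨ A ∩ B = ∅ := by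
  by_cases hne : (A ∩ B).Nonempty
  · obtain ⟨x, hxA, hxB⟩ := hne
    left
    intro y hy
    rwa [h hy hxA]
  · right; right
    exact Set.not_nonempty_iff_eq_empty.mp hne

end MyAux

/-- For a k-edge-colored hypergraph (edge instances E, edges as multisets,
colors), the family consisting of the color hinge sets H_i, the sets H^i (union
of hinge sets of α-wings of color i of degree ≥ 2 at α), the hinge sets H_W of
α-wings of the color classes, and the edge hinge sets H_e, is a laminar family
of subsets of H(α). Hinges at α are modelled as pairs (edge instance, occurrence). -/
theorem stmt10 [DecidableEq V] [Fintype E] [DecidableEq E]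
    (edge : E → Multiset V) (k : ℕ) (color : E → Fin k) (α : V) :
    ∀ A ∈ ({S : Set (Σ e : E, Fin ((edge e).count α)) |
          (∃ i : Fin k, S = {x | color x.1 = i}) ∨
          (∃ i : Fin k, S = ⋃ W ∈ {W : Finset E |
              wingIdx edge (Finset.univ.filter (fun e => color e = i)) W α ∧
              2 ≤ degIdx edge W α}, {x | x.1 ∈ W}) ∨
          (∃ i : Fin k, ∃ W : Finset E,
              wingIdx edge (Finset.univ.filter (fun e => color e = i)) W α ∧
              S = {x | x.1 ∈ W}) ∨
          (∃ e₀ : E, S = {x | x.1 = e₀})} : Set (Set (Σ e : E, Fin ((edge e).count α)))),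
      ∀ B ∈ ({S : Set (Σ e : E, Fin ((edge e).count α)) |
          (∃ i : Fin k, S = {x | color x.1 = i}) ∨
          (∃ i : Fin k, S = ⋃ W ∈ {W : Finset E |
              wingIdx edge (Finset.univ.filter (fun e => color e = i)) W α ∧
              2 ≤ degIdx edge W α}, {x | x.1 ∈ W}) ∨
          (∃ i : Fin k, ∃ W : Finset E,
              wingIdx edge (Finset.univ.filter (fun e => color e = i)) W α ∧
              S = {x | x.1 ∈ W}) ∨
          (∃ e₀ : E, S = {x | x.1 = e₀})} : Set (Set (Σ e : E, Fin ((edge e).count α)))),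
      A ⊆ B ∨ B ⊆ A ∨ A ∩ B = ∅ := by
  intro A hA B hB
  simp only [Set.mem_setOf_eq] at hA hB
  have memU : ∀ (i : Fin k) (x : Σ e : E, Fin ((edge e).count α)),
      (x ∈ ⋃ W ∈ {W : Finset E |
          wingIdx edge (Finset.univ.filter (fun e => color e = i)) W α ∧
          2 ≤ degIdx edge W α}, {x : (Σ e : E, Fin ((edge e).count α)) | x.1 ∈ W}) ↔
      ∃ W : Finset E, (wingIdx edge (Finset.univ.filter (fun e => color e = i)) W α ∧
          2 ≤ degIdx edge W α) ∧ x.1 ∈ W := by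
    intro i x
    simp [Set.mem_iUnion]
  have colU : ∀ (i : Fin k) (x : Σ e : E, Fin ((edge e).count α)),
      (x ∈ ⋃ W ∈ {W : Finset E |
          wingIdx edge (Finset.univ.filter (fun e => color e = i)) W α ∧
          2 ≤ degIdx edge W α}, {x : (Σ e : E, Fin ((edge e).count α)) | x.1 ∈ W}) →
      color x.1 = i := by
    intro i x hx
    obtain ⟨W, ⟨hw, _⟩, h⟩ := (memU i x).mp hx
    exact my_wing_color hw _ h
  rcases hA with ⟨i, rfl⟩ | ⟨i, rfl⟩ | ⟨i, W, hWi, rfl⟩ | ⟨e₀, rfl⟩ <;>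
    rcases hB with ⟨j, rfl⟩ | ⟨j, rfl⟩ | ⟨j, W', hW', rfl⟩ | ⟨e₁, rfl⟩
  -- A = H_i, B = H_j
  · by_cases hij : i = j
    · subst hij; left; exact subset_rfl
    · right; right; exact my_disj_colors hij (fun x hx => hx) (fun x hx => hx)
  -- A = H_i, B = H^j
  · by_cases hij : j = i
    · subst hij; right; left; exact fun x hx => colU j x hx
    · right; right
      exact my_disj_colors (fun h => hij h.symm) (fun x hx => hx) (colU j)
  -- A = H_i, B = H_{W'}
  · by_cases hij : j = i
    · subst hij; right; left; exact fun x hx => my_wing_color hW' x.1 hx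
    · right; right
      exact my_disj_colors (fun h => hij h.symm) (fun x hx => hx)
        (fun x hx => my_wing_color hW' x.1 hx)
  -- A = H_i, B = H_{e₁}
  · by_cases h : color e₁ = i
    · right; left
      intro x hx
      show color x.1 = i
      rw [show x.1 = e₁ from hx]; exact h
    · right; right
      exact my_disj_colors (fun hc => h hc.symm) (fun x hx => hx)
        (fun x hx => by rw [show x.1 = e₁ from hx])
  -- A = H^i, B = H_j
  · by_cases hij : i = j
    · subst hij; left; exact fun x hx => colU i x hx
    · right; right; exact my_disj_colors hij (colU i) (fun x hx => hx)
  -- A = H^i, B = H^j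
  · by_cases hij : i = j
    · subst hij; left; exact subset_rfl
    · right; right; exact my_disj_colors hij (colU i) (colU j)
  -- A = H^i, B = H_{W'}
  · by_cases hij : i = j
    · subst hij
      by_cases hdeg : 2 ≤ degIdx edge W' α
      · right; left
        intro x hx
        exact (memU i x).mpr ⟨W', ⟨hW', hdeg⟩, hx⟩
      · exact my_subsingleton_laminar (my_hinge_subsingleton (by omega))
    · right; right
      exact my_disj_colors hij (colU i) (fun x hx => my_wing_color hW' x.1 hx)
  -- A = H^i, B = H_{e₁}
  · by_cases h : ∃ W : Finset E,
        (wingIdx edge (Finset.univ.filter (fun e => color e = i)) W α ∧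
          2 ≤ degIdx edge W α) ∧ e₁ ∈ W
    · obtain ⟨W, hW, he⟩ := h
      right; left
      intro x hx
      exact (memU i x).mpr ⟨W, hW, by rw [show x.1 = e₁ from hx]; exact he⟩
    · right; right
      ext x
      simp only [Set.mem_inter_iff, Set.mem_empty_iff_false, iff_false]
      rintro ⟨hxA, hxB⟩
      obtain ⟨W, hW, hxW⟩ := (memU i x).mp hxA
      exact h ⟨W, hW, by rwa [show x.1 = e₁ from hxB] at hxW⟩
  -- A = H_W, B = H_j
  · by_cases hij : i = j
    · subst hij; left; exact fun x hx => my_wing_color hWi x.1 hx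
    · right; right
      exact my_disj_colors hij (fun x hx => my_wing_color hWi x.1 hx) (fun x hx => hx)
  -- A = H_W, B = H^j
  · by_cases hij : i = j
    · subst hij
      by_cases hdeg : 2 ≤ degIdx edge W α
      · left
        intro x hx
        exact (memU i x).mpr ⟨W, ⟨hWi, hdeg⟩, hx⟩
      · exact my_subsingleton_laminar' (my_hinge_subsingleton (by omega))
    · right; right
      exact my_disj_colors hij (fun x hx => my_wing_color hWi x.1 hx) (colU j)
  -- A = H_W, B = H_{W'}
  · by_cases hij : i = j
    · subst hij
      rcases my_wing_laminar hWi hW' with h | h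
      · left; exact h
      · right; right; exact h
    · right; right
      exact my_disj_colors hij (fun x hx => my_wing_color hWi x.1 hx)
        (fun x hx => my_wing_color hW' x.1 hx)
  -- A = H_W, B = H_{e₁}
  · by_cases h : e₁ ∈ W
    · right; left
      intro x hx
      show x.1 ∈ W
      rw [show x.1 = e₁ from hx]; exact h
    · right; right
      ext x
      simp only [Set.mem_inter_iff, Set.mem_empty_iff_false, iff_false]
      rintro ⟨hxA, hxB⟩
      simp only [Set.mem_setOf_eq] at hxA hxB
      exact h (hxB ▸ hxA)
  -- A = H_{e₀}, B = H_j
  · by_cases h : color e₀ = j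
    · left
      intro x hx
      show color x.1 = j
      rw [show x.1 = e₀ from hx]; exact h
    · right; right
      exact my_disj_colors h (fun x hx => by rw [show x.1 = e₀ from hx]) (fun x hx => hx)
  -- A = H_{e₀}, B = H^j
  · by_cases h : ∃ W : Finset E,
        (wingIdx edge (Finset.univ.filter (fun e => color e = j)) W α ∧
          2 ≤ degIdx edge W α) ∧ e₀ ∈ W
    · obtain ⟨W, hW, he⟩ := h
      left
      intro x hx
      exact (memU j x).mpr ⟨W, hW, by rw [show x.1 = e₀ from hx]; exact he⟩
    · right; right
      ext x
      simp only [Set.mem_inter_iff, Set.mem_empty_iff_false, iff_false]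
      rintro ⟨hxA, hxB⟩
      obtain ⟨W, hW, hxW⟩ := (memU j x).mp hxB
      exact h ⟨W, hW, by rwa [show x.1 = e₀ from hxA] at hxW⟩
  -- A = H_{e₀}, B = H_{W'}
  · by_cases h : e₀ ∈ W'
    · left
      intro x hx
      show x.1 ∈ W'
      rw [show x.1 = e₀ from hx]; exact h
    · right; right
      ext x
      simp only [Set.mem_inter_iff, Set.mem_empty_iff_false, iff_false]
      rintro ⟨hxA, hxB⟩
      simp only [Set.mem_setOf_eq] at hxA hxB
      exact h (hxA ▸ hxB)
  -- A = H_{e₀}, B = H_{e₁}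
  · by_cases h : e₀ = e₁
    · subst h; left; exact subset_rfl
    · right; right
      ext x
      simp only [Set.mem_inter_iff, Set.mem_empty_iff_false, iff_false]
      rintro ⟨h0, h1⟩
      exact h ((show x.1 = e₀ from h0).symm.trans (show x.1 = e₁ from h1))
end
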